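/- arXiv:1711.06950 — 3 statements merged into one kernel-verified Lean document; each statement's English description precedes it below -/
import Mathlib

section
/- Suppose the Laurent polynomial f = ∑_{i=−m}^{n} a_i X^i over L satisfies the annulus integrality conditions, and suppose f has no root z ∈ L with |π| < |z| < 1 (equivalently, every nonzero root z in L of the ordinary polynomial P(X) = X^m · f(X) ∈ L[X] satisfies |z| ≤ |π| or |z| ≥ 1). Then |a_0| = 1. -/
open Polynomial

section vologodsky_aux

variable {L : Type*} [Field L] (v : AbsoluteValue L ℝ)

theorem vologodsky_vsum_le (hna : ∀ x y : L, v (x + y) ≤ max (v x) (v y))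
    {ι : Type*} (t : Finset ι) (f : ι → L) {c : ℝ} (hc : 0 ≤ c)
    (h : ∀ x ∈ t, v (f x) ≤ c) : v (∑ x ∈ t, f x) ≤ c := by
  classical
  induction t using Finset.induction with
  | empty => simpa using hc
  | insert _ _ hx ih =>
    rw [Finset.sum_insert hx]
    exact le_trans (hna _ _)
      (max_le (h _ (Finset.mem_insert_self _ _))
        (ih fun y hy => h y (Finset.mem_insert_of_mem hy)))

theorem vologodsky_v_add_eq (hna : ∀ x y : L, v (x + y) ≤ max (v x) (v y))
    {x y : L} (h : v y < v x) : v (x + y) = v x := by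
  have h1 : v (x + y) ≤ v x := le_trans (hna x y) (max_le le_rfl h.le)
  have h2 : v x ≤ max (v (x + y)) (v y) := by
    have := hna (x + y) (-y)
    simpa using this
  rcases le_max_iff.mp h2 with h' | h'
  · exact le_antisymm h1 h'
  · exact absurd h' (not_le.mpr h)

theorem vologodsky_coeff_prod_small (hna : ∀ x y : L, v (x + y) ≤ max (v x) (v y))
    {r : ℝ} (hr0 : 0 ≤ r) (hr1 : r ≤ 1)
    (S : Multiset L) (hS : ∀ z ∈ S, v z ≤ r) (q : ℕ) :
    v (((S.map fun z => X - C z).prod).coeff q) ≤ r ^ (Multiset.card S - q) := by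
  induction S using Multiset.induction generalizing q with
  | empty =>
    simp only [Multiset.map_zero, Multiset.prod_zero, Multiset.card_zero, Nat.zero_sub, pow_zero]
    rcases q with _ | q
    · simp [Polynomial.coeff_one]
    · simp [Polynomial.coeff_one]
  | cons z S ih =>
    have hz : v z ≤ r := hS z (Multiset.mem_cons_self _ _)
    have hS' : ∀ w ∈ S, v w ≤ r := fun w hw => hS w (Multiset.mem_cons_of_mem hw)
    rw [Multiset.map_cons, Multiset.prod_cons]
    set Q := (S.map fun z => X - C z).prod with hQ
    have hcoeff : ∀ k, ((X - C z) * Q).coeff k = (X * Q).coeff k - z * Q.coeff k := by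
      intro k
      rw [sub_mul, Polynomial.coeff_sub, Polynomial.coeff_C_mul]
    rcases q with _ | q
    · rw [hcoeff 0]
      have : (X * Q).coeff 0 = 0 := by
        rw [Polynomial.mul_coeff_zero, Polynomial.coeff_X_zero, zero_mul]
      rw [this, zero_sub, v.map_neg, v.map_mul]
      calc v z * v (Q.coeff 0) ≤ r * r ^ (Multiset.card S) := by
            simpa using mul_le_mul hz (ih hS' 0) (v.nonneg _) hr0
        _ = r ^ (Multiset.card (z ::ₘ S) - 0) := by
            rw [Multiset.card_cons, Nat.sub_zero, pow_succ, mul_comm]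
    · rw [hcoeff (q+1), Polynomial.coeff_X_mul, sub_eq_add_neg]
      refine le_trans (hna _ _) (max_le ?_ ?_)
      · refine le_trans (ih hS' q) ?_
        apply pow_le_pow_of_le_one hr0 hr1
        rw [Multiset.card_cons]; omega
      · rw [v.map_neg, v.map_mul]
        calc v z * v (Q.coeff (q+1)) ≤ r * r ^ (Multiset.card S - (q+1)) :=
              mul_le_mul hz (ih hS' (q+1)) (v.nonneg _) hr0
          _ = r ^ (Multiset.card S - (q+1) + 1) := by rw [pow_succ, mul_comm]
          _ ≤ r ^ (Multiset.card (z ::ₘ S) - (q+1)) := by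
              apply pow_le_pow_of_le_one hr0 hr1
              rw [Multiset.card_cons]; omega

theorem vologodsky_prod_ge_one (s : Multiset ℝ) (h : ∀ x ∈ s, 1 ≤ x) : 1 ≤ s.prod := by
  induction s using Multiset.induction with
  | empty => simp
  | cons a s ih =>
    rw [Multiset.prod_cons]
    have h1 := h a (Multiset.mem_cons_self _ _)
    have h2 := ih fun x hx => h x (Multiset.mem_cons_of_mem hx)
    nlinarith

theorem vologodsky_coeff_prod_big (hna : ∀ x y : L, v (x + y) ≤ max (v x) (v y))
    (B : Multiset L) (hB : ∀ z ∈ B, 1 ≤ v z) (p : ℕ) :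
    v (((B.map fun z => X - C z).prod).coeff p) ≤ (B.map v).prod := by
  induction B using Multiset.induction generalizing p with
  | empty =>
    rcases p with _ | p
    · simp [Polynomial.coeff_one]
    · simp [Polynomial.coeff_one]
  | cons z B ih =>
    have hz : 1 ≤ v z := hB z (Multiset.mem_cons_self _ _)
    have hB' : ∀ w ∈ B, 1 ≤ v w := fun w hw => hB w (Multiset.mem_cons_of_mem hw)
    have hPB1 : (1:ℝ) ≤ (B.map v).prod := by
      apply vologodsky_prod_ge_one
      intro x hx
      obtain ⟨w, hw, rfl⟩ := Multiset.mem_map.mp hx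
      exact hB' w hw
    have hPB0 : (0:ℝ) ≤ (B.map v).prod := le_trans zero_le_one hPB1
    rw [Multiset.map_cons, Multiset.prod_cons, Multiset.map_cons, Multiset.prod_cons]
    set Q := (B.map fun z => X - C z).prod with hQ
    have hcoeff : ∀ k, ((X - C z) * Q).coeff k = (X * Q).coeff k - z * Q.coeff k := by
      intro k
      rw [sub_mul, Polynomial.coeff_sub, Polynomial.coeff_C_mul]
    have key : ∀ k, v (z * Q.coeff k) ≤ v z * (B.map v).prod := by
      intro k
      rw [v.map_mul]
      exact mul_le_mul_of_nonneg_left (ih hB' k) (v.nonneg z)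
    rcases p with _ | p
    · rw [hcoeff 0]
      have h0 : (X * Q).coeff 0 = 0 := by
        rw [Polynomial.mul_coeff_zero, Polynomial.coeff_X_zero, zero_mul]
      rw [h0, zero_sub, v.map_neg]
      exact key 0
    · rw [hcoeff (p+1), Polynomial.coeff_X_mul, sub_eq_add_neg]
      refine le_trans (hna _ _) (max_le ?_ ?_)
      · exact le_trans (ih hB' p) (le_mul_of_one_le_left hPB0 hz)
      · rw [v.map_neg]; exact key (p+1)

theorem vologodsky_coeff_zero_big (B : Multiset L) :
    v (((B.map fun z => X - C z).prod).coeff 0) = (B.map v).prod := by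
  rw [Polynomial.coeff_zero_eq_eval_zero, Polynomial.eval_multiset_prod]
  rw [Multiset.map_map]
  have h1 : (B.map fun z : L => (X - C z).eval 0) = B.map fun z => -z := by
    apply Multiset.map_congr rfl
    intro z _
    simp
  rw [show ((fun p : L[X] => p.eval 0) ∘ fun z : L => X - C z)
      = fun z : L => (X - C z).eval 0 from rfl, h1]
  rw [map_multiset_prod v, Multiset.map_map]
  congr 1
  apply Multiset.map_congr rfl
  intro z _
  simp

end vologodsky_aux


/-- Let `L` be an algebraically closed field with a nonarchimedean absolute value `v`,
and `π ∈ L` with `0 < |π| < 1`.  If the Laurent polynomial `f = ∑_{i=-m}^{n} a_i X^i`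
satisfies the annulus integrality conditions
(`|a_i| ≤ min 1 |π|^{-i}`, some `0 ≤ i ≤ n` with `|a_i| = 1`,
some `-m ≤ i ≤ 0` with `|a_i| = |π|^{-i}`),
and `f` has no root `z` with `|π| < |z| < 1`, then `|a_0| = 1`. -/
theorem vologodsky_stmt_0
    {L : Type*} [Field L] [IsAlgClosed L]
    (v : AbsoluteValue L ℝ)
    (hna : ∀ x y : L, v (x + y) ≤ max (v x) (v y))
    (π : L) (hπ0 : 0 < v π) (hπ1 : v π < 1)
    (m n : ℕ) (a : ℤ → L)
    (hsupp : ∀ i : ℤ, (i < -(m : ℤ) ∨ (n : ℤ) < i) → a i = 0)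
    (h_i : ∀ i : ℤ, -(m : ℤ) ≤ i → i ≤ (n : ℤ) → v (a i) ≤ min 1 (v π ^ (-i)))
    (h_ii : ∃ i : ℤ, 0 ≤ i ∧ i ≤ (n : ℤ) ∧ v (a i) = 1)
    (h_iii : ∃ i : ℤ, -(m : ℤ) ≤ i ∧ i ≤ 0 ∧ v (a i) = v π ^ (-i))
    (hroot : ∀ z : L, z ≠ 0 →
      (∑ i ∈ Finset.Icc (-(m : ℤ)) (n : ℤ), a i * z ^ i) = 0 →
      ¬ (v π < v z ∧ v z < 1)) :
    v (a 0) = 1 := by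
  classical
  set N := m + n with hN
  set P : Polynomial L := ∑ j ∈ Finset.range (N+1), Polynomial.monomial j (a ((j:ℤ) - m))
    with hPdef
  -- coefficients of P
  have hcoeff : ∀ j : ℕ, j ≤ N → P.coeff j = a ((j:ℤ) - m) := by
    intro j hj
    rw [hPdef, Polynomial.finset_sum_coeff]
    rw [Finset.sum_eq_single j]
    · rw [Polynomial.coeff_monomial, if_pos rfl]
    · intro k _ hk; rw [Polynomial.coeff_monomial, if_neg hk]
    · intro hj'; exact absurd (Finset.mem_range.mpr (by omega)) hj'
  have hdeg : P.natDegree ≤ N := by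
    rw [hPdef]
    apply Polynomial.natDegree_sum_le_of_forall_le
    intro j hj
    exact le_trans (Polynomial.natDegree_monomial_le _)
      (Nat.lt_succ_iff.mp (Finset.mem_range.mp hj))
  obtain ⟨i0, hi00, hi0n, hv0⟩ := h_ii
  have hane : a i0 ≠ 0 := by
    intro h; rw [h, v.map_zero] at hv0; norm_num at hv0
  have hP0 : P ≠ 0 := by
    intro h
    have hc : P.coeff (m + i0.toNat) = a i0 := by
      rw [hcoeff _ (by omega)]
      congr 1
      push_cast
      omega
    rw [h, Polynomial.coeff_zero] at hc
    exact hane hc.symm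
  -- all roots are outside the open annulus
  have hroots : ∀ z ∈ P.roots, v z ≤ v π ∨ 1 ≤ v z := by
    intro z hz
    by_cases hz0 : z = 0
    · left; rw [hz0, v.map_zero]; exact hπ0.le
    · have hev : P.eval z = 0 := (Polynomial.isRoot_of_mem_roots hz)
      have hev2 : P.eval z = z ^ m * ∑ i ∈ Finset.Icc (-(m : ℤ)) (n : ℤ), a i * z ^ i := by
        rw [hPdef, Polynomial.eval_finset_sum]
        simp only [Polynomial.eval_monomial]
        rw [Finset.mul_sum]
        apply Finset.sum_nbij' (i := fun j : ℕ => (j:ℤ) - m) (j := fun i : ℤ => (i + m).toNat)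
        · intro j hj
          simp only [Finset.mem_range] at hj
          simp only [Finset.mem_Icc]
          omega
        · intro i hi
          simp only [Finset.mem_Icc] at hi
          simp only [Finset.mem_range]
          omega
        · intro j hj; omega
        · intro i hi
          simp only [Finset.mem_Icc] at hi
          push_cast
          omega
        · intro j hj
          simp only [Finset.mem_range] at hj
          rw [mul_comm (z ^ m : L), mul_assoc]
          congr 1
          rw [← zpow_natCast z m, ← zpow_add₀ hz0, ← zpow_natCast z j]
          congr 1
          omega
      rw [hev] at hev2
      have hzm : (z : L) ^ m ≠ 0 := pow_ne_zero _ hz0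
      have hsum : (∑ i ∈ Finset.Icc (-(m : ℤ)) (n : ℤ), a i * z ^ i) = 0 := by
        rcases mul_eq_zero.mp hev2.symm with h | h
        · exact absurd h hzm
        · exact h
      have hnr := hroot z hz0 hsum
      by_cases h1 : v π < v z
      · right
        by_contra h2
        exact hnr ⟨h1, lt_of_not_ge h2⟩
      · left; exact le_of_not_gt h1
  -- factorization
  have hsplit : P = C P.leadingCoeff * (P.roots.map fun z => X - C z).prod :=
    Polynomial.Splits.eq_prod_roots (IsAlgClosed.splits P)
  set B : Multiset L := P.roots.filter (fun z => 1 ≤ v z) with hBdef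
  set S : Multiset L := P.roots.filter (fun z => ¬ 1 ≤ v z) with hSdef
  have hBS : B + S = P.roots := Multiset.filter_add_not _ _
  have hSsmall : ∀ z ∈ S, v z ≤ v π := by
    intro z hz
    rw [hSdef, Multiset.mem_filter] at hz
    rcases hroots z hz.1 with h | h
    · exact h
    · exact absurd h hz.2
  have hBbig : ∀ z ∈ B, 1 ≤ v z := by
    intro z hz
    rw [hBdef, Multiset.mem_filter] at hz
    exact hz.2
  set QB : L[X] := (B.map fun z => X - C z).prod with hQBdef
  set QS : L[X] := (S.map fun z => X - C z).prod with hQSdef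
  set s : ℕ := Multiset.card S with hsdef
  set PB : ℝ := (B.map v).prod with hPBdef
  have hfact : P = C P.leadingCoeff * (QB * QS) := by
    rw [hQBdef, hQSdef, ← Multiset.prod_add, ← Multiset.map_add, hBS]
    exact hsplit
  have hPB1 : (1:ℝ) ≤ PB := by
    apply vologodsky_prod_ge_one
    intro x hx
    obtain ⟨w, hw, rfl⟩ := Multiset.mem_map.mp hx
    exact hBbig w hw
  have hPB0 : (0:ℝ) < PB := lt_of_lt_of_le zero_lt_one hPB1
  have hlc0 : (0:ℝ) < v P.leadingCoeff := v.pos (Polynomial.leadingCoeff_ne_zero.mpr hP0)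
  set M : ℝ := v P.leadingCoeff * PB with hMdef
  have hM0 : 0 < M := mul_pos hlc0 hPB0
  -- QS is monic of degree s
  have hQSmonic : QS.Monic := by
    apply Polynomial.monic_multiset_prod_of_monic
    intro z _
    exact Polynomial.monic_X_sub_C z
  have hQSdeg : QS.natDegree = s := by
    rw [hQSdef, Polynomial.natDegree_multiset_prod_X_sub_C_eq_card]
  have hQStop : QS.coeff s = 1 := by
    rw [← hQSdeg]
    exact hQSmonic.coeff_natDegree
  -- the key bounds
  have hQSb : ∀ q : ℕ, v (QS.coeff q) ≤ v π ^ (s - q) :=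
    vologodsky_coeff_prod_small v hna hπ0.le hπ1.le S hSsmall
  have hQBb : ∀ p : ℕ, v (QB.coeff p) ≤ PB :=
    vologodsky_coeff_prod_big v hna B hBbig
  have hF1 : ∀ j : ℕ, v (P.coeff j) ≤ M * v π ^ (s - j) := by
    intro j
    rw [hfact, Polynomial.coeff_C_mul, v.map_mul, hMdef, mul_assoc]
    apply mul_le_mul_of_nonneg_left _ (v.nonneg _)
    rw [Polynomial.coeff_mul]
    apply vologodsky_vsum_le v hna _ _ (by positivity)
    intro x hx
    rw [v.map_mul]
    have hq : x.2 ≤ j := by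
      have hxa : x.1 + x.2 = j := Finset.HasAntidiagonal.mem_antidiagonal.mp hx
      omega
    calc v (QB.coeff x.1) * v (QS.coeff x.2) ≤ PB * v π ^ (s - x.2) :=
          mul_le_mul (hQBb x.1) (hQSb x.2) (v.nonneg _) hPB0.le
      _ ≤ PB * v π ^ (s - j) := by
          apply mul_le_mul_of_nonneg_left _ hPB0.le
          apply pow_le_pow_of_le_one hπ0.le hπ1.le
          omega
  have hF2 : v (P.coeff s) = M := by
    rw [hfact, Polynomial.coeff_C_mul, v.map_mul, hMdef]
    congr 1
    rw [Polynomial.coeff_mul]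
    have hmem : ((0 : ℕ), s) ∈ Finset.HasAntidiagonal.antidiagonal s := by
      simp
    rw [← Finset.add_sum_erase _ _ hmem]
    rw [vologodsky_v_add_eq v hna]
    · rw [hQStop, mul_one]
      rw [hQBdef]
      exact vologodsky_coeff_zero_big v B
    · have hrest : v (∑ x ∈ (Finset.HasAntidiagonal.antidiagonal s).erase (0, s),
          QB.coeff x.1 * QS.coeff x.2) ≤ PB * v π := by
        apply vologodsky_vsum_le v hna _ _ (by positivity)
        intro x hx
        obtain ⟨hxne, hxmem⟩ := Finset.mem_erase.mp hx
        have hxadd : x.1 + x.2 = s := by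
          simpa using Finset.HasAntidiagonal.mem_antidiagonal.mp hxmem
        have hx1 : x.1 ≠ 0 := by
          intro h
          apply hxne
          have : x.2 = s := by omega
          exact Prod.ext h this
        rw [v.map_mul]
        calc v (QB.coeff x.1) * v (QS.coeff x.2) ≤ PB * v π ^ (s - x.2) :=
              mul_le_mul (hQBb x.1) (hQSb x.2) (v.nonneg _) hPB0.le
          _ ≤ PB * v π := by
              apply mul_le_mul_of_nonneg_left _ hPB0.le
              calc v π ^ (s - x.2) ≤ v π ^ 1 := by
                    apply pow_le_pow_of_le_one hπ0.le hπ1.le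
                    omega
                _ = v π := pow_one _
      have hfirst : v (QB.coeff 0 * QS.coeff s) = PB := by
        rw [hQStop, mul_one, hQBdef]
        exact vologodsky_coeff_zero_big v B
      rw [hfirst]
      calc v (∑ x ∈ (Finset.HasAntidiagonal.antidiagonal s).erase (0, s), QB.coeff x.1 * QS.coeff x.2)
          ≤ PB * v π := hrest
        _ < PB * 1 := by exact mul_lt_mul_of_pos_left hπ1 hPB0
        _ = PB := mul_one _
  have hsN : s ≤ N := by
    calc s ≤ Multiset.card P.roots := by
          rw [hsdef]
          exact Multiset.card_le_card (Multiset.filter_le _ _)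
      _ ≤ P.natDegree := Polynomial.card_roots' P
      _ ≤ N := hdeg
  -- M ≥ 1 from condition (ii)
  have hM1 : 1 ≤ M := by
    have hj0 : m + i0.toNat ≤ N := by omega
    have hc : v (P.coeff (m + i0.toNat)) = 1 := by
      rw [hcoeff _ hj0]
      rw [show ((m + i0.toNat : ℕ) : ℤ) - m = i0 by push_cast; omega]
      exact hv0
    have := hF1 (m + i0.toNat)
    rw [hc] at this
    calc (1:ℝ) ≤ M * v π ^ (s - (m + i0.toNat)) := this
      _ ≤ M * 1 := by
          apply mul_le_mul_of_nonneg_left _ hM0.le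
          exact pow_le_one₀ hπ0.le hπ1.le
      _ = M := mul_one _
  by_cases hsm : s ≤ m
  · -- case s ≤ m : conclude s = m and v (a 0) = 1
    have hMle : M ≤ v π ^ (m - s) := by
      have hia := h_i ((s:ℤ) - m) (by omega) (by omega)
      rw [show -((s:ℤ) - m) = ((m - s : ℕ) : ℤ) by push_cast; omega] at hia
      rw [zpow_natCast] at hia
      have hc : v (P.coeff s) = v (a ((s:ℤ) - m)) := by rw [hcoeff _ (by omega)]
      rw [hF2] at hc
      rw [← hc] at hia
      exact le_trans hia (min_le_right _ _)
    have hms : m = s := by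
      by_contra hne
      have hpos : 0 < m - s := by omega
      have : v π ^ (m - s) < 1 := pow_lt_one₀ hπ0.le hπ1 (by omega)
      linarith
    have h0 : v (a 0) = M := by
      have := hcoeff s (by omega)
      rw [show ((s:ℕ) : ℤ) - m = 0 by omega] at this
      rw [← this, hF2]
    rw [h0]
    have : v π ^ (m - s) = 1 := by rw [hms]; simp
    rw [this] at hMle
    linarith
  · -- case m < s : contradiction
    exfalso
    push_neg at hsm
    obtain ⟨i1, hi1m, hi10, hv1⟩ := h_iii
    set k : ℕ := (-i1).toNat with hkdef
    have hki : (k : ℤ) = -i1 := by omega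
    set j1 : ℕ := (m + i1).toNat with hj1def
    have hj1 : (j1 : ℤ) = m + i1 := by omega
    have hj1m : j1 ≤ m := by omega
    have hc1 : v (P.coeff j1) = v π ^ k := by
      rw [hcoeff _ (by omega)]
      rw [show ((j1:ℕ):ℤ) - m = i1 by omega]
      rw [hv1, ← hki, zpow_natCast]
    have hb1 := hF1 j1
    rw [hc1] at hb1
    have hsj : s - j1 = (s - m) + k := by omega
    rw [hsj, pow_add] at hb1
    have hdiv : 1 ≤ M * v π ^ (s - m) := by
      have hπk : 0 < v π ^ k := pow_pos hπ0 k
      have hb1' : 1 * v π ^ k ≤ (M * v π ^ (s - m)) * v π ^ k := by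
        rw [one_mul, mul_assoc]
        exact hb1
      exact le_of_mul_le_mul_right hb1' hπk
    have hMle : M ≤ 1 := by
      have hia := h_i ((s:ℤ) - m) (by omega) (by omega)
      have hc : v (P.coeff s) = v (a ((s:ℤ) - m)) := by rw [hcoeff _ (by omega)]
      rw [hF2] at hc
      rw [← hc] at hia
      exact le_trans hia (min_le_left _ _)
    have hlt : M * v π ^ (s - m) < 1 := by
      calc M * v π ^ (s - m) ≤ 1 * v π ^ (s - m) := by
            apply mul_le_mul_of_nonneg_right hMle (pow_nonneg hπ0.le _)
        _ = v π ^ (s - m) := one_mul _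
        _ < 1 := pow_lt_one₀ hπ0.le hπ1 (by omega)
    linarith
end

section
/- Let f = ∑_i a_i X^i be an element of the annulus ring R. Then: (1) f is divisible by X in R if and only if ν(a_i) ≥ 1 − i for every i ≤ 0; (2) f is divisible by πX^{−1} in R if and only if ν(a_i) ≥ 1 for every i ≥ 0. Consequently, f is divisible by neither X nor πX^{−1} in R if and only if there exists i ≥ 0 with ν(a_i) = 0 and there exists i ≤ 0 with ν(a_i) = −i. -/
/-- Membership in the annulus ring `R ⊆ K[X,X⁻¹]`: a Laurent polynomial
`f = ∑ aᵢ Xⁱ` lies in `R` iff every coefficient satisfies `ν(aᵢ) ≥ max(0, -i)`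
(with the convention that zero coefficients satisfy every such inequality). -/
def MemAnnulusRing {K : Type*} [Field K] (ν : K → ℤ)
    (f : LaurentPolynomial K) : Prop :=
  ∀ i : ℤ, f.coeff i = 0 ∨ max 0 (-i) ≤ ν (f.coeff i)

lemma coeff_T_one_mul {K : Type*} [Field K] (g : LaurentPolynomial K) (i : ℤ) :
    (LaurentPolynomial.T 1 * g : LaurentPolynomial K).coeff i = g.coeff (i - 1) := by
  rw [LaurentPolynomial.T, AddMonoidAlgebra.coeff_single_mul_apply]
  ring_nf

lemma coeff_C_T_neg_one_mul {K : Type*} [Field K] (p : K) (g : LaurentPolynomial K) (i : ℤ) :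
    (LaurentPolynomial.C p * LaurentPolynomial.T (-1) * g : LaurentPolynomial K).coeff i
      = p * g.coeff (i + 1) := by
  rw [← LaurentPolynomial.single_eq_C_mul_T, AddMonoidAlgebra.coeff_single_mul_apply]
  ring_nf

/-- Let `O` be a DVR with fraction field `K`, uniformizer `π`, and normalized
additive valuation `ν` (`ν(π) = 1`).  For `f = ∑ aᵢ Xⁱ` in the annulus ring `R`:
(1) `f` is divisible by `X` in `R` iff `ν(aᵢ) ≥ 1 - i` for all `i ≤ 0`;
(2) `f` is divisible by `πX⁻¹` in `R` iff `ν(aᵢ) ≥ 1` for all `i ≥ 0`;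
consequently `f` is divisible by neither `X` nor `πX⁻¹` in `R` iff there is
`i ≥ 0` with `ν(aᵢ) = 0` and there is `i ≤ 0` with `ν(aᵢ) = -i`. -/
theorem vologodsky_stmt_2
    {O K : Type*} [CommRing O] [IsDomain O] [IsDiscreteValuationRing O]
    [Field K] [Algebra O K] [IsFractionRing O K]
    (π : O) (hπ : Irreducible π)
    (ν : K → ℤ)
    (hν_mul : ∀ x y : K, x ≠ 0 → y ≠ 0 → ν (x * y) = ν x + ν y)
    (hν_add : ∀ x y : K, x ≠ 0 → y ≠ 0 → x + y ≠ 0 → min (ν x) (ν y) ≤ ν (x + y))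
    (hν_int : ∀ x : K, x ≠ 0 → (0 ≤ ν x ↔ ∃ y : O, algebraMap O K y = x))
    (hν_π : ν (algebraMap O K π) = 1)
    (f : LaurentPolynomial K) (hf : MemAnnulusRing ν f) :
    ((∃ g : LaurentPolynomial K, MemAnnulusRing ν g ∧
        f = LaurentPolynomial.T 1 * g) ↔
      (∀ i : ℤ, i ≤ 0 → f.coeff i = 0 ∨ 1 - i ≤ ν (f.coeff i))) ∧
    ((∃ g : LaurentPolynomial K, MemAnnulusRing ν g ∧
        f = LaurentPolynomial.C (algebraMap O K π) * LaurentPolynomial.T (-1) * g) ↔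
      (∀ i : ℤ, 0 ≤ i → f.coeff i = 0 ∨ 1 ≤ ν (f.coeff i))) ∧
    ((¬ (∃ g : LaurentPolynomial K, MemAnnulusRing ν g ∧
          f = LaurentPolynomial.T 1 * g) ∧
      ¬ (∃ g : LaurentPolynomial K, MemAnnulusRing ν g ∧
          f = LaurentPolynomial.C (algebraMap O K π) * LaurentPolynomial.T (-1) * g)) ↔
      ((∃ i : ℤ, 0 ≤ i ∧ f.coeff i ≠ 0 ∧ ν (f.coeff i) = 0) ∧
       (∃ i : ℤ, i ≤ 0 ∧ f.coeff i ≠ 0 ∧ ν (f.coeff i) = -i))) := by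
  set p : K := algebraMap O K π with hpdef
  have hp : p ≠ 0 :=
    (map_ne_zero_iff _ (IsFractionRing.injective O K)).mpr hπ.ne_zero
  have hν_one : ν 1 = 0 := by
    have := hν_mul 1 1 one_ne_zero one_ne_zero
    simp at this; omega
  have hν_inv : ν p⁻¹ = -1 := by
    have := hν_mul p p⁻¹ hp (inv_ne_zero hp)
    rw [mul_inv_cancel₀ hp, hν_one] at this
    omega
  have P1 : (∃ g : LaurentPolynomial K, MemAnnulusRing ν g ∧
        f = LaurentPolynomial.T 1 * g) ↔
      (∀ i : ℤ, i ≤ 0 → f.coeff i = 0 ∨ 1 - i ≤ ν (f.coeff i)) := by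
    constructor
    · rintro ⟨g, hg, rfl⟩ i hi
      rw [coeff_T_one_mul]
      rcases hg (i - 1) with h0 | h1
      · exact Or.inl h0
      · right
        have : -(i - 1) ≤ ν (g.coeff (i - 1)) := le_trans (le_max_right _ _) h1
        omega
    · intro h
      refine ⟨LaurentPolynomial.T (-1) * f, ?_, ?_⟩
      · intro i
        have hc : (LaurentPolynomial.T (-1) * f : LaurentPolynomial K).coeff i = f.coeff (i + 1) := by
          rw [LaurentPolynomial.T, AddMonoidAlgebra.coeff_single_mul_apply]
          ring_nf
        rw [hc]
        rcases eq_or_ne (f.coeff (i + 1)) 0 with h0 | h0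
        · exact Or.inl h0
        · right
          have hν1 := (hf (i + 1)).resolve_left h0
          have hν2 : (0 : ℤ) ≤ ν (f.coeff (i + 1)) := le_trans (le_max_left _ _) hν1
          refine max_le hν2 ?_
          rcases le_or_gt 0 i with hi | hi
          · omega
          · have := (h (i + 1) (by omega)).resolve_left h0
            omega
      · rw [← mul_assoc, ← LaurentPolynomial.T_add]
        norm_num [LaurentPolynomial.T_zero]
  have P2 : (∃ g : LaurentPolynomial K, MemAnnulusRing ν g ∧
        f = LaurentPolynomial.C p * LaurentPolynomial.T (-1) * g) ↔
      (∀ i : ℤ, 0 ≤ i → f.coeff i = 0 ∨ 1 ≤ ν (f.coeff i)) := by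
    constructor
    · rintro ⟨g, hg, rfl⟩ i hi
      rw [coeff_C_T_neg_one_mul]
      rcases eq_or_ne (g.coeff (i + 1)) 0 with h0 | h0
      · left; simp [h0]
      · right
        rw [hν_mul p _ hp h0, hν_π]
        have := le_trans (le_max_left _ _) ((hg (i + 1)).resolve_left h0)
        omega
    · intro h
      refine ⟨LaurentPolynomial.C p⁻¹ * (LaurentPolynomial.T 1 * f), ?_, ?_⟩
      · intro i
        have hc : (LaurentPolynomial.C p⁻¹ * (LaurentPolynomial.T 1 * f) :
            LaurentPolynomial K).coeff i = p⁻¹ * f.coeff (i - 1) := by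
          rw [show (LaurentPolynomial.C p⁻¹ : LaurentPolynomial K) =
              AddMonoidAlgebra.single 0 p⁻¹ by
                rw [LaurentPolynomial.single_eq_C_mul_T, LaurentPolynomial.T_zero, mul_one],
            AddMonoidAlgebra.coeff_single_mul_apply, coeff_T_one_mul]
          ring_nf
        rw [hc]
        rcases eq_or_ne (f.coeff (i - 1)) 0 with h0 | h0
        · left; simp [h0]
        · right
          rw [hν_mul _ _ (inv_ne_zero hp) h0, hν_inv]
          refine max_le ?_ ?_
          · rcases le_or_gt 1 i with hi | hi
            · have := (h (i - 1) (by omega)).resolve_left h0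
              omega
            · have := le_trans (le_max_right _ _) ((hf (i - 1)).resolve_left h0)
              omega
          · rcases le_or_gt 1 i with hi | hi
            · have := (h (i - 1) (by omega)).resolve_left h0
              omega
            · have := le_trans (le_max_right _ _) ((hf (i - 1)).resolve_left h0)
              omega
      · have key : LaurentPolynomial.C p * LaurentPolynomial.T (-1) *
            (LaurentPolynomial.C p⁻¹ * (LaurentPolynomial.T 1 * f)) =
            (LaurentPolynomial.C p * LaurentPolynomial.C p⁻¹) *
              ((LaurentPolynomial.T (-1) * LaurentPolynomial.T 1) * f) := by
          ring
        rw [key, ← map_mul, mul_inv_cancel₀ hp, map_one, one_mul,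
          ← LaurentPolynomial.T_add]
        norm_num [LaurentPolynomial.T_zero]
  refine ⟨P1, P2, ?_⟩
  rw [P1, P2]
  push_neg
  constructor
  · rintro ⟨⟨i, hi, h0, hlt⟩, ⟨j, hj, h0', hlt'⟩⟩
    refine ⟨⟨j, hj, h0', ?_⟩, ⟨i, hi, h0, ?_⟩⟩
    · have := le_trans (le_max_left _ _) ((hf j).resolve_left h0')
      omega
    · have := le_trans (le_max_right _ _) ((hf i).resolve_left h0)
      omega
  · rintro ⟨⟨j, hj, h0', he'⟩, ⟨i, hi, h0, he⟩⟩
    exact ⟨⟨i, hi, h0, by omega⟩, ⟨j, hj, h0', by omega⟩⟩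
end

section
/- The O-algebra homomorphism from the polynomial ring O[X, Y] to the Laurent polynomial ring K[X, X^{−1}] sending X ↦ X and Y ↦ πX^{−1} has kernel exactly the principal ideal generated by XY − π, and its image is exactly the annulus ring R, i.e. the subring of K[X, X^{−1}] consisting of Laurent polynomials ∑_i a_i X^i with ν(a_i) ≥ max(0, −i) for all i. In particular O[X, Y]/(XY − π) is isomorphic as an O-algebra to R. -/
open MvPolynomial LaurentPolynomial

lemma phi_monomial {O K : Type*} [CommRing O] [Field K] [Algebra O K]
    (π : O) (m : Fin 2 →₀ ℕ) (c : O) :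
    MvPolynomial.aeval
      (fun j : Fin 2 => if j = 0 then (LaurentPolynomial.T 1 : LaurentPolynomial K)
        else LaurentPolynomial.C (algebraMap O K π) * LaurentPolynomial.T (-1))
      (MvPolynomial.monomial m c)
      = AddMonoidAlgebra.single ((m 0 : ℤ) - (m 1 : ℤ))
          (algebraMap O K c * (algebraMap O K π) ^ (m 1)) := by
  rw [MvPolynomial.aeval_monomial, Finsupp.prod_fintype _ _ (fun i => pow_zero _),
    Fin.prod_univ_two]
  simp only [eq_self_iff_true, if_true, if_neg (by decide : ¬ ((1:Fin 2) = 0)), T_pow, mul_pow,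
    single_eq_C_mul_T, map_mul, map_pow, LaurentPolynomial.algebraMap_apply,
    mul_one, mul_neg_one]
  rw [show ((m 0 : ℤ) - m 1) = (m 0 : ℤ) + (-(m 1):ℤ) by ring, T_add]
  ring

lemma fin2_finsupp_ext {m m' : Fin 2 →₀ ℕ} (h0 : m 0 = m' 0) (h1 : m 1 = m' 1) : m = m' :=
  Finsupp.ext fun i => by fin_cases i <;> assumption

lemma phi_as_sum {O K : Type*} [CommRing O] [Field K] [Algebra O K]
    (π : O) (P : MvPolynomial (Fin 2) O) :
    MvPolynomial.aeval
      (fun j : Fin 2 => if j = 0 then (LaurentPolynomial.T 1 : LaurentPolynomial K)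
        else LaurentPolynomial.C (algebraMap O K π) * LaurentPolynomial.T (-1)) P
      = ∑ m ∈ P.support, AddMonoidAlgebra.single ((m 0 : ℤ) - (m 1 : ℤ))
          (algebraMap O K (MvPolynomial.coeff m P) * (algebraMap O K π) ^ (m 1)) := by
  conv_lhs => rw [P.as_sum, map_sum]
  exact Finset.sum_congr rfl fun m _ => phi_monomial π m _

/-- Let `O` be a DVR with fraction field `K`, uniformizer `π`, and normalized
additive valuation `ν` (`ν(π) = 1`).  The `O`-algebra homomorphism
`O[X,Y] → K[X,X⁻¹]` with `X ↦ X`, `Y ↦ πX⁻¹` has kernel the principal ideal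
`(XY - π)` and image exactly the annulus ring `R`.  In particular
`O[X,Y]/(XY - π) ≅ R` as `O`-algebras. -/
theorem vologodsky_stmt_3
    {O K : Type*} [CommRing O] [IsDomain O] [IsDiscreteValuationRing O]
    [Field K] [Algebra O K] [IsFractionRing O K]
    (π : O) (hπ : Irreducible π)
    (ν : K → ℤ)
    (hν_mul : ∀ x y : K, x ≠ 0 → y ≠ 0 → ν (x * y) = ν x + ν y)
    (hν_add : ∀ x y : K, x ≠ 0 → y ≠ 0 → x + y ≠ 0 → min (ν x) (ν y) ≤ ν (x + y))
    (hν_int : ∀ x : K, x ≠ 0 → (0 ≤ ν x ↔ ∃ y : O, algebraMap O K y = x))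
    (hν_π : ν (algebraMap O K π) = 1)
    (φ : MvPolynomial (Fin 2) O →ₐ[O] LaurentPolynomial K)
    (hφ : φ = MvPolynomial.aeval
      (fun j : Fin 2 => if j = 0 then LaurentPolynomial.T 1
        else LaurentPolynomial.C (algebraMap O K π) * LaurentPolynomial.T (-1))) :
    RingHom.ker φ.toRingHom =
        Ideal.span {MvPolynomial.X 0 * MvPolynomial.X 1 - MvPolynomial.C π} ∧
      (∀ f : LaurentPolynomial K, f ∈ Set.range φ ↔ MemAnnulusRing ν f) ∧
      Nonempty ((MvPolynomial (Fin 2) O ⧸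
          Ideal.span {MvPolynomial.X 0 * MvPolynomial.X 1 - MvPolynomial.C π})
        ≃ₐ[O] φ.range) := by
  -- basic facts
  have hinj : Function.Injective (algebraMap O K) := IsFractionRing.injective O K
  have hπ0 : algebraMap O K π ≠ 0 := fun h => hπ.ne_zero (hinj (by simpa using h))
  have hν1 : ν 1 = 0 := by
    have := hν_mul 1 1 one_ne_zero one_ne_zero
    rw [mul_one] at this; omega
  have hνpow : ∀ n : ℕ, ν ((algebraMap O K π) ^ n) = n := by
    intro n
    induction n with
    | zero => simpa using hν1
    | succ n ih =>
      rw [pow_succ, hν_mul _ _ (pow_ne_zero _ hπ0) hπ0, ih, hν_π]; push_cast; ring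
  have hν0 : ∀ y : O, algebraMap O K y ≠ 0 → 0 ≤ ν (algebraMap O K y) := by
    intro y hy
    exact (hν_int _ hy).2 ⟨y, rfl⟩
  -- the span is in the kernel
  have hgen : φ (MvPolynomial.X 0 * MvPolynomial.X 1 - MvPolynomial.C π) = 0 := by
    subst hφ
    simp only [map_sub, map_mul, MvPolynomial.aeval_X, MvPolynomial.aeval_C,
      LaurentPolynomial.algebraMap_apply, eq_self_iff_true, if_true,
      if_neg (by decide : ¬ ((1:Fin 2) = 0))]
    rw [show (LaurentPolynomial.T 1 : LaurentPolynomial K) *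
        (LaurentPolynomial.C (algebraMap O K π) * LaurentPolynomial.T (-1)) =
        LaurentPolynomial.C (algebraMap O K π) * (LaurentPolynomial.T 1 *
          LaurentPolynomial.T (-1)) by ring, ← T_add]
    simp
  have hle : Ideal.span {MvPolynomial.X 0 * MvPolynomial.X 1 - MvPolynomial.C (π : O)}
      ≤ RingHom.ker φ.toRingHom := by
    rw [Ideal.span_le, Set.singleton_subset_iff]
    simpa [RingHom.mem_ker] using hgen
  have hsum : ∀ P : MvPolynomial (Fin 2) O, φ P
      = ∑ m ∈ P.support, AddMonoidAlgebra.single ((m 0 : ℤ) - (m 1 : ℤ))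
          (algebraMap O K (MvPolynomial.coeff m P) * (algebraMap O K π) ^ (m 1)) := by
    intro P; rw [hφ]; exact phi_as_sum π P
  -- the submodule of polynomials with no mixed monomials
  let N : Submodule O (MvPolynomial (Fin 2) O) :=
    { carrier := {P | ∀ m : Fin 2 →₀ ℕ, 0 < m 0 → 0 < m 1 → MvPolynomial.coeff m P = 0}
      add_mem' := fun {a b} ha hb m h0 h1 => by
        rw [MvPolynomial.coeff_add, ha m h0 h1, hb m h0 h1, add_zero]
      zero_mem' := fun m _ _ => MvPolynomial.coeff_zero m
      smul_mem' := fun c a ha m h0 h1 => by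
        rw [MvPolynomial.coeff_smul, ha m h0 h1, smul_zero] }
  set S : Submodule O (MvPolynomial (Fin 2) O) :=
    (Ideal.span {MvPolynomial.X 0 * MvPolynomial.X 1
      - MvPolynomial.C (π : O)}).restrictScalars O ⊔ N with hS
  have hmono : ∀ b a : ℕ, (MvPolynomial.X 0 ^ a * MvPolynomial.X 1 ^ b
      : MvPolynomial (Fin 2) O) ∈ S := by
    intro b
    induction b with
    | zero =>
      intro a
      refine Submodule.mem_sup_right ?_
      intro m h0 h1
      rw [pow_zero, mul_one, MvPolynomial.coeff_X_pow]
      rw [if_neg]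
      intro h
      rw [← h] at h1
      simp [Finsupp.single_apply] at h1
    | succ b ih =>
      intro a
      cases a with
      | zero =>
        refine Submodule.mem_sup_right ?_
        intro m h0 h1
        rw [pow_zero, one_mul, MvPolynomial.coeff_X_pow]
        rw [if_neg]
        intro h
        rw [← h] at h0
        simp [Finsupp.single_apply] at h0
      | succ a =>
        have key : (MvPolynomial.X 0 ^ (a+1) * MvPolynomial.X 1 ^ (b+1)
            : MvPolynomial (Fin 2) O) =
            (MvPolynomial.X 0 ^ a * MvPolynomial.X 1 ^ b) *
              (MvPolynomial.X 0 * MvPolynomial.X 1 - MvPolynomial.C π)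
            + π • (MvPolynomial.X 0 ^ a * MvPolynomial.X 1 ^ b) := by
          rw [MvPolynomial.smul_eq_C_mul]; ring
        rw [key]
        refine Submodule.add_mem _ (Submodule.mem_sup_left ?_)
          (Submodule.smul_mem _ _ (ih a))
        exact Ideal.mul_mem_left _ _ (Ideal.subset_span rfl)
  have hall : ∀ P : MvPolynomial (Fin 2) O, P ∈ S := by
    intro P
    have hm2 : (∑ m ∈ P.support, MvPolynomial.monomial m (MvPolynomial.coeff m P)) ∈ S := by
      refine Submodule.sum_mem _ fun m _ => ?_
      have hmon : MvPolynomial.monomial m (MvPolynomial.coeff m P)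
        = MvPolynomial.coeff m P •
          (MvPolynomial.X 0 ^ (m 0) * MvPolynomial.X 1 ^ (m 1)
            : MvPolynomial (Fin 2) O) := by
        rw [MvPolynomial.smul_eq_C_mul, MvPolynomial.monomial_eq,
          Finsupp.prod_fintype _ _ (fun i => pow_zero _), Fin.prod_univ_two]
      rw [hmon]
      exact Submodule.smul_mem _ _ (hmono (m 1) (m 0))
    rw [← P.as_sum] at hm2
    exact hm2
  -- injectivity on N
  have hNinj : ∀ P ∈ N, φ P = 0 → P = 0 := by
    intro P hP h0
    by_contra hne
    obtain ⟨m, hm⟩ := MvPolynomial.support_nonempty.2 hne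
    have hcases : ∀ m' ∈ P.support, m' 0 = 0 ∨ m' 1 = 0 := by
      intro m' hm'
      by_contra hc
      push_neg at hc
      exact (MvPolynomial.mem_support_iff.1 hm')
        (hP m' (Nat.pos_of_ne_zero hc.1) (Nat.pos_of_ne_zero hc.2))
    have hPsum := hsum P
    rw [h0] at hPsum
    have key : (0 : LaurentPolynomial K).coeff ((m 0 : ℤ) - (m 1 : ℤ))
        = algebraMap O K (MvPolynomial.coeff m P) * (algebraMap O K π) ^ (m 1) := by
      conv_lhs => rw [hPsum]
      rw [AddMonoidAlgebra.coeff_sum, Finset.sum_apply']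
      rw [Finset.sum_eq_single_of_mem m hm ?_]
      · rw [AddMonoidAlgebra.coeff_single, Finsupp.single_apply, if_pos rfl]
      · intro m' hm' hne'
        rw [AddMonoidAlgebra.coeff_single, Finsupp.single_apply, if_neg]
        intro hd
        apply hne'
        rcases hcases m' hm' with h|h <;> rcases hcases m hm with h2|h2 <;>
          exact fin2_finsupp_ext (by omega) (by omega)
    have hne2 : algebraMap O K (MvPolynomial.coeff m P) * (algebraMap O K π) ^ (m 1) ≠ 0 :=
      mul_ne_zero (fun h => (MvPolynomial.mem_support_iff.1 hm) (hinj (by simpa using h)))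
        (pow_ne_zero _ hπ0)
    exact hne2 (by simpa using key.symm)
  -- kernel equality
  have hker : RingHom.ker φ.toRingHom
      = Ideal.span {MvPolynomial.X 0 * MvPolynomial.X 1 - MvPolynomial.C (π : O)} := by
    refine le_antisymm ?_ hle
    intro P hP
    obtain ⟨q, hq, n, hn, rfl⟩ := Submodule.mem_sup.1 (hall P)
    have hφq : φ q = 0 := hle hq
    have hφn : φ n = 0 := by
      have hqn : φ (q + n) = 0 := hP
      rw [map_add, hφq, zero_add] at hqn
      exact hqn
    rw [hNinj n hn hφn, add_zero]
    exact hq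
  -- sum closure for the valuation bound
  have hsumprop : ∀ (k : ℤ) (s : Finset (Fin 2 →₀ ℕ)) (g : (Fin 2 →₀ ℕ) → K),
      (∀ a ∈ s, g a = 0 ∨ k ≤ ν (g a)) →
      ((∑ a ∈ s, g a) = 0 ∨ k ≤ ν (∑ a ∈ s, g a)) := by
    intro k s g hg
    refine Finset.sum_induction g (fun x => x = 0 ∨ k ≤ ν x) ?_ (Or.inl rfl) hg
    intro a b ha hb
    by_cases ha0 : a = 0
    · simpa [ha0] using hb
    by_cases hb0 : b = 0
    · simpa [hb0] using ha
    rcases ha with rfl|ha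
    · exact absurd rfl ha0
    rcases hb with rfl|hb
    · exact absurd rfl hb0
    by_cases hab : a + b = 0
    · exact Or.inl hab
    · exact Or.inr (le_trans (le_min ha hb) (hν_add a b ha0 hb0 hab))
  -- image forward
  have himg1 : ∀ P : MvPolynomial (Fin 2) O, MemAnnulusRing ν (φ P) := by
    intro P i
    have heval : (φ P).coeff i = ∑ m ∈ P.support,
        (AddMonoidAlgebra.single ((m 0 : ℤ) - (m 1 : ℤ))
          (algebraMap O K (MvPolynomial.coeff m P) * (algebraMap O K π) ^ (m 1))
          : LaurentPolynomial K).coeff i := by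
      rw [hsum P, AddMonoidAlgebra.coeff_sum, Finset.sum_apply']
    rw [heval]
    apply hsumprop
    intro m hm
    rw [AddMonoidAlgebra.coeff_single, Finsupp.single_apply]
    by_cases hd : ((m 0 : ℤ) - (m 1 : ℤ)) = i
    · rw [if_pos hd]
      right
      have hc0 : algebraMap O K (MvPolynomial.coeff m P) ≠ 0 :=
        fun h => (MvPolynomial.mem_support_iff.1 hm) (hinj (by simpa using h))
      rw [hν_mul _ _ hc0 (pow_ne_zero _ hπ0), hνpow]
      have h1 : 0 ≤ ν (algebraMap O K (MvPolynomial.coeff m P)) := hν0 _ hc0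
      rw [max_le_iff]
      constructor <;> omega
    · rw [if_neg hd]
      exact Or.inl rfl
  -- image backward
  have himg2 : ∀ f : LaurentPolynomial K, MemAnnulusRing ν f → ∃ P, φ P = f := by
    intro f hf
    have hexists : ∀ i : ℤ, ∃ Q : MvPolynomial (Fin 2) O,
        i ∈ f.coeff.support → φ Q = AddMonoidAlgebra.single i (f.coeff i) := by
      intro i
      by_cases hi : i ∈ f.coeff.support
      swap
      · exact ⟨0, fun h => absurd h hi⟩
      have hfi : f.coeff i ≠ 0 := Finsupp.mem_support_iff.1 hi
      rcases hf i with h|h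
      · exact absurd h hfi
      by_cases hi0 : 0 ≤ i
      · obtain ⟨y, hy⟩ := (hν_int (f.coeff i) hfi).1 (le_trans (le_max_left _ _) h)
        refine ⟨MvPolynomial.monomial (Finsupp.single 0 i.toNat) y, fun _ => ?_⟩
        rw [hφ, phi_monomial]
        have e0 : ((Finsupp.single (0 : Fin 2) i.toNat) 0) = i.toNat :=
          Finsupp.single_eq_same
        have e1 : ((Finsupp.single (0 : Fin 2) i.toNat) 1) = 0 :=
          Finsupp.single_eq_of_ne (by decide)
        rw [e0, e1, hy, pow_zero, mul_one]
        congr 1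
        omega
      · push_neg at hi0
        rw [max_eq_right (by omega : (0:ℤ) ≤ -i)] at h
        set n : ℕ := (-i).toNat with hn
        have hνn : (n : ℤ) = -i := Int.toNat_of_nonneg (by omega)
        have hπn : (algebraMap O K π) ^ n ≠ 0 := pow_ne_zero _ hπ0
        set z : K := f.coeff i * ((algebraMap O K π) ^ n)⁻¹ with hzdef
        have hz0 : z ≠ 0 := mul_ne_zero hfi (inv_ne_zero hπn)
        have hzπ : z * (algebraMap O K π) ^ n = f.coeff i := by
          rw [hzdef]; field_simp
        have hνz : 0 ≤ ν z := by
          have hmulν := hν_mul z _ hz0 hπn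
          rw [hzπ, hνpow] at hmulν
          omega
        obtain ⟨y, hy⟩ := (hν_int z hz0).1 hνz
        refine ⟨MvPolynomial.monomial (Finsupp.single 1 n) y, fun _ => ?_⟩
        rw [hφ, phi_monomial]
        have e0 : ((Finsupp.single (1 : Fin 2) n) 0) = 0 :=
          Finsupp.single_eq_of_ne (by decide)
        have e1 : ((Finsupp.single (1 : Fin 2) n) 1) = n :=
          Finsupp.single_eq_same
        rw [e0, e1, hy, hzπ]
        congr 1
        omega
    choose Q hQ using hexists
    refine ⟨∑ i ∈ f.coeff.support, Q i, ?_⟩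
    rw [map_sum, Finset.sum_congr rfl (fun i hi => hQ i hi)]
    exact AddMonoidAlgebra.sum_coeff_single f
  refine ⟨hker, fun f => ⟨?_, fun hf => ?_⟩, ?_⟩
  · rintro ⟨P, rfl⟩
    exact himg1 P
  · exact himg2 f hf
  · have hker2 : RingHom.ker φ.rangeRestrict
        = Ideal.span {MvPolynomial.X 0 * MvPolynomial.X 1 - MvPolynomial.C (π : O)} := by
      rw [AlgHom.ker_rangeRestrict]
      exact hker
    rw [← hker2]
    exact ⟨Ideal.quotientKerAlgEquivOfSurjective (AlgHom.rangeRestrict_surjective φ)⟩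
end
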